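/- Define B(a,b,c) = Σ_{i=0}^{a-1} Σ_{j=0}^{b-1} Σ_{k=0}^{c-1} (i+j+k)!/(i!·j!·k!). Then for natural numbers a, b ≥ 0 and c ≥ 1, B(a+1,b+1,c-1) + B(a,b,c) = (a+b+c)! / ((a+b+1)·a!·b!·(c-1)!) - 1. -/

import Mathlib

open Finset

/-- `B(a,b,c)`: triple sum of multinomial coefficients `(i+j+k)!/(i!j!k!)`
over `0 ≤ i < a`, `0 ≤ j < b`, `0 ≤ k < c`. -/
def B (a b c : ℕ) : ℚ :=
  ∑ i ∈ Finset.range a, ∑ j ∈ Finset.range b, ∑ k ∈ Finset.range c,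
    ((i + j + k).factorial : ℚ) / (i.factorial * j.factorial * k.factorial)

def T (i j k : ℕ) : ℚ :=
  ((i + j + k).factorial : ℚ) / (i.factorial * j.factorial * k.factorial)

lemma factQ (n : ℕ) : ((n+1).factorial : ℚ) = (n+1) * n.factorial := by
  rw [Nat.factorial_succ]; push_cast; ring

lemma factne (n : ℕ) : (n.factorial : ℚ) ≠ 0 := by
  exact_mod_cast n.factorial_ne_zero

lemma pascal3 (a b k : ℕ) :
    T (a+1) (b+1) (k+1) = T a (b+1) (k+1) + T (a+1) b (k+1) + T (a+1) (b+1) k := by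
  unfold T
  rw [show (a+1)+(b+1)+(k+1) = (a+b+k+2)+1 by ring,
      show a+(b+1)+(k+1) = (a+b+k+1)+1 by ring,
      show (a+1)+b+(k+1) = (a+b+k+1)+1 by ring,
      show (a+1)+(b+1)+k = (a+b+k+1)+1 by ring,
      factQ (a+b+k+2), factQ (a+b+k+1), factQ a, factQ b, factQ k]
  have h1 := factne a; have h2 := factne b; have h3 := factne k
  have h4 := factne (a+b+k+1)
  field_simp
  push_cast; ring

lemma p2jk (b k : ℕ) : T 0 (b+1) (k+1) = T 0 b (k+1) + T 0 (b+1) k := by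
  unfold T
  rw [show 0+(b+1)+(k+1) = (b+k+1)+1 by ring,
      show 0+b+(k+1) = b+k+1 by ring,
      show 0+(b+1)+k = b+k+1 by ring,
      factQ (b+k+1), factQ b, factQ k]
  have h2 := factne b; have h3 := factne k; have h4 := factne (b+k+1)
  field_simp
  push_cast; ring

lemma p2ij (a b : ℕ) : T (a+1) (b+1) 0 = T a (b+1) 0 + T (a+1) b 0 := by
  unfold T
  rw [show (a+1)+(b+1)+0 = (a+b+1)+1 by ring,
      show a+(b+1)+0 = a+b+1 by ring,
      show (a+1)+b+0 = a+b+1 by ring,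
      factQ (a+b+1), factQ a, factQ b]
  have h1 := factne a; have h2 := factne b; have h4 := factne (a+b+1)
  field_simp
  push_cast; ring

lemma base00 (a k : ℕ) : T (a+1) 0 k + T a 0 (k+1) = T (a+1) 0 (k+1) := by
  unfold T
  rw [show (a+1)+0+k = a+k+1 by ring,
      show a+0+(k+1) = a+k+1 by ring,
      show (a+1)+0+(k+1) = (a+k+1)+1 by ring,
      factQ (a+k+1), factQ a, factQ k]
  have h1 := factne a; have h3 := factne k; have h4 := factne (a+k+1)
  field_simp
  push_cast; ring

lemma T00 (i j : ℕ) : T i j 0 = ((i+j).factorial : ℚ) / (i.factorial * j.factorial) := by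
  unfold T
  simp [Nat.factorial]

lemma Tzero (b k : ℕ) : T 0 b k = ((b+k).factorial : ℚ) / (b.factorial * k.factorial) := by
  unfold T
  simp [Nat.factorial]

lemma hockey_j (k b : ℕ) : ∑ j ∈ range (b+1), T 0 j k = T 0 b (k+1) := by
  induction b with
  | zero =>
      simp [Tzero]
      rw [div_self (factne k), div_self (factne (k+1))]
  | succ b ih =>
      rw [Finset.sum_range_succ, ih, p2jk]

lemma LP (a k b : ℕ) :
    ∑ j ∈ range (b+1), (T (a+1) j k + T a j (k+1)) = T (a+1) b (k+1) := by
  induction b with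
  | zero => simpa using base00 a k
  | succ b ih =>
      rw [Finset.sum_range_succ, ih, pascal3]
      ring

lemma claim (k a b : ℕ) :
    (∑ i ∈ range (a+1), ∑ j ∈ range (b+1), T i j k)
      + (∑ i ∈ range a, ∑ j ∈ range b, T i j (k+1)) = T a b (k+1) := by
  induction a with
  | zero => simpa using hockey_j k b
  | succ a ih =>
      rw [Finset.sum_range_succ, Finset.sum_range_succ (fun i => ∑ j ∈ range b, T i j (k+1))]
      have h1 := LP a k b
      rw [Finset.sum_add_distrib, Finset.sum_range_succ (fun j => T a j (k+1))] at h1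
      linarith [ih]

lemma Hlem (a b : ℕ) : ∑ j ∈ range b, T a j 0 = T (a+1) b 0 - T a b 0 := by
  induction b with
  | zero =>
      simp [T00]
      rw [div_self (factne (a+1)), div_self (factne a)]
      ring
  | succ b ih =>
      rw [Finset.sum_range_succ, ih]
      have := p2ij a b
      linarith

lemma BC (a b : ℕ) : (∑ i ∈ range a, ∑ j ∈ range b, T i j 0) + 1 = T a b 0 := by
  induction a with
  | zero =>
      simp [T00]
      rw [div_self (factne b)]
  | succ a ih =>
      rw [Finset.sum_range_succ]
      have := Hlem a b
      linarith

lemma Bsucc (a b c : ℕ) :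
    B a b (c+1) = B a b c + ∑ i ∈ range a, ∑ j ∈ range b, T i j c := by
  unfold B T
  rw [← Finset.sum_add_distrib]
  congr 1; ext i
  rw [← Finset.sum_add_distrib]
  congr 1; ext j
  rw [Finset.sum_range_succ]

lemma Bone (a b : ℕ) : B a b 1 = ∑ i ∈ range a, ∑ j ∈ range b, T i j 0 := by
  unfold B T
  simp

lemma Bzero (a b : ℕ) : B a b 0 = 0 := by simp [B]

lemma ML (a b : ℕ) : ∀ d, B (a+1) (b+1) d + B a b (d+1) + 1 = ∑ k ∈ range (d+1), T a b k := by
  intro d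
  induction d with
  | zero =>
      rw [Bzero, Bone]
      simpa using BC a b
  | succ d ih =>
      rw [Bsucc (a+1) (b+1) d, Bsucc a b (d+1), Finset.sum_range_succ (fun k => T a b k) (d+1)]
      have := claim d a b
      linarith

lemma Lsum (a b c : ℕ) :
    ∑ k ∈ range (c+1), T a b k
      = ((a+b+c+1).factorial : ℚ) / ((a+b+1) * a.factorial * b.factorial * c.factorial) := by
  induction c with
  | zero =>
      rw [show a+b+0+1 = (a+b)+1 by ring, factQ (a+b)]
      simp [T00]
      have h1 := factne a; have h2 := factne b; have h3 := factne (a+b)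
      have h4 : ((a:ℚ)+b+1) ≠ 0 := by positivity
      field_simp
  | succ c ih =>
      rw [Finset.sum_range_succ, ih]
      unfold T
      rw [show a+b+(c+1)+1 = (a+b+c+1)+1 by ring,
          show a+b+(c+1) = a+b+c+1 by ring,
          factQ (a+b+c+1), factQ c]
      have h1 := factne a; have h2 := factne b; have h3 := factne c
      have h5 := factne (a+b+c+1)
      have h4 : ((a:ℚ)+b+1) ≠ 0 := by positivity
      field_simp
      push_cast; ring

theorem stmt16 (a b c : ℕ) (hc : 1 ≤ c) :
    B (a + 1) (b + 1) (c - 1) + B a b c =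
      ((a + b + c).factorial : ℚ) /
        ((a + b + 1) * a.factorial * b.factorial * (c - 1).factorial) - 1 := by
  obtain ⟨d, rfl⟩ := Nat.exists_eq_add_of_le hc
  have hd : 1 + d - 1 = d := by omega
  rw [hd, show a + b + (1 + d) = a + b + d + 1 by ring, ← Lsum a b d,
      show 1 + d = d + 1 by ring]
  have := ML a b d
  linarith
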